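/- For all positive integers n, r, s: U_{n+r}·U_{n+s} − U_n·U_{n+r+s} = (−q)^n·u_r·(U_1·U_s − U_0·U_{s+1}) in the real quaternion algebra. -/
import Mathlib


open Quaternion

theorem stmt10 (p q : ℝ) (u : ℕ → ℝ) (hu : ∀ n, u (n + 2) = p * u (n + 1) + q * u n)
    (hu0 : u 0 = 0) (hu1 : u 1 = 1)
    (U : ℕ → ℍ[ℝ]) (hU : ∀ n, U n = ⟨u n, u (n + 1), u (n + 2), u (n + 3)⟩)
    (n r s : ℕ) (hn : 1 ≤ n) (hr : 1 ≤ r) (hs : 1 ≤ s) :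
    U (n + r) * U (n + s) - U n * U (n + r + s) =
      ((-q) ^ n * u r) • (U 1 * U s - U 0 * U (s + 1)) := by
  -- U satisfies the same recurrence
  have hUrec : ∀ m, U (m + 2) = p • U (m + 1) + q • U m := by
    intro m
    rw [hU, hU, hU]
    ext <;> simp [QuaternionAlgebra.smul_mk]
    · exact hu m
    · exact hu (m + 1)
    · exact hu (m + 2)
    · exact hu (m + 3)
  -- the r = 1 case, by induction on n
  have key : ∀ m, U (m + 1) * U (m + s) - U m * U (m + s + 1) =
      ((-q) ^ m) • (U 1 * U s - U 0 * U (s + 1)) := by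
    intro m
    induction m with
    | zero => simp
    | succ m ih =>
      have e1 : U (m + 1 + 1) = p • U (m + 1) + q • U m := hUrec m
      have e2 : U (m + 1 + s + 1) = p • U (m + s + 1) + q • U (m + s) := by
        have := hUrec (m + s)
        convert this using 2 <;> omega
      have e3 : U (m + 1 + s) = U (m + s + 1) := by congr 1; omega
      rw [e1, e2, e3]
      rw [pow_succ]
      rw [show ((-q) ^ m * -q) • (U 1 * U s - U 0 * U (s + 1)) =
        (-q) • ((-q) ^ m • (U 1 * U s - U 0 * U (s + 1))) by rw [smul_smul]; ring_nf]
      rw [← ih]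
      simp only [add_mul, mul_add, smul_mul_assoc, mul_smul_comm, smul_sub]
      module
  -- general r by two-step induction
  have main : ∀ k, U (n + k) * U (n + s) - U n * U (n + k + s) =
      u k • (U (n + 1) * U (n + s) - U n * U (n + s + 1)) := by
    intro k
    induction k using Nat.twoStepInduction with
    | zero => simp [hu0]
    | one => rw [hu1, one_smul, show n + 1 + s = n + s + 1 from by omega]
    | more k ih1 ih2 =>
      have a1 : n + (k + 2) = n + k + 2 := by omega
      have a2 : n + (k + 2) + s = n + k + s + 2 := by omega
      have a3 : n + (k + 1) = n + k + 1 := by omega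
      have a4 : n + (k + 1) + s = n + k + s + 1 := by omega
      rw [a3, show n + k + 1 + s = n + k + s + 1 from by omega] at ih2
      rw [a1, show n + k + 2 + s = n + k + s + 2 from by omega, hUrec, hUrec, hu k]
      simp only [add_mul, mul_add, smul_mul_assoc, mul_smul_comm]
      rw [show (p * u (k + 1) + q * u k) • (U (n + 1) * U (n + s) - U n * U (n + s + 1)) =
        p • (u (k+1) • (U (n + 1) * U (n + s) - U n * U (n + s + 1)))
        + q • (u k • (U (n + 1) * U (n + s) - U n * U (n + s + 1))) by
          rw [smul_smul, smul_smul, ← add_smul]]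
      rw [← ih2, ← ih1]
      module
  calc U (n + r) * U (n + s) - U n * U (n + r + s)
      = u r • (U (n + 1) * U (n + s) - U n * U (n + s + 1)) := main r
    _ = u r • (((-q) ^ n) • (U 1 * U s - U 0 * U (s + 1))) := by rw [key n]
    _ = ((-q) ^ n * u r) • (U 1 * U s - U 0 * U (s + 1)) := by
        rw [smul_smul]; ring_nf
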